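/- Let f : X → Y be a compact-preserving function from a Fréchet topological space X to a Hausdorff space Y. Then for each point x ∈ X and each open neighborhood O of f(x) in Y, there is a neighborhood U of x in X such that f(U) ⊆ f[x] ∪ O, where f[x] = {y ∈ Y : x lies in the closure of f⁻¹(y)}. -/

import Mathlib

open Filter Topology Set

/-- A function is compact-preserving if images of compact sets are compact. -/
def CompactPreserving {X Y : Type*} [TopologicalSpace X] [TopologicalSpace Y]
    (f : X → Y) : Prop := ∀ K : Set X, IsCompact K → IsCompact (f '' K)

/-- The oscillation set `f[x] = {y : x ∈ closure (f⁻¹ y)}`. -/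
def oscSet {X Y : Type*} [TopologicalSpace X] (f : X → Y) (x : X) : Set Y :=
  {y | x ∈ closure (f ⁻¹' {y})}

theorem stmt0 {X Y : Type*} [TopologicalSpace X] [TopologicalSpace Y]
    [FrechetUrysohnSpace X] [T2Space Y] (f : X → Y)
    (hf : CompactPreserving f) (x : X) (O : Set Y) (hO : IsOpen O) (hfx : f x ∈ O) :
    ∃ U ∈ 𝓝 x, f '' U ⊆ oscSet f x ∪ O := by
  by_contra hcon
  push_neg at hcon
  -- x is in the closure of the "bad" set A
  have hxA : x ∈ closure {z | f z ∉ oscSet f x ∪ O} := by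
    rw [mem_closure_iff_nhds]
    intro U hU
    obtain ⟨y, ⟨z, hzU, rfl⟩, hy⟩ := not_subset.1 (hcon U hU)
    exact ⟨z, hzU, hy⟩
  obtain ⟨u, huA, hut⟩ := mem_closure_iff_seq_limit.1 hxA
  -- the neighborhoods W n of x avoiding the fibers over f (u n)
  set W : ℕ → Set X := fun n => (closure (f ⁻¹' {f (u n)}))ᶜ with hWdef
  have hW : ∀ n, W n ∈ 𝓝 x := by
    intro n
    refine isClosed_closure.isOpen_compl.mem_nhds ?_
    exact fun h => (huA n) (Or.inl h)
  have hWnot : ∀ n z, z ∈ W n → f z ≠ f (u n) := by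
    intro n z hz h
    exact hz (subset_closure (by simp [h]))
  -- choose the next index of the subsequence
  have hnext : ∀ p : ℕ, ∃ N, p < N ∧ ∀ m ≤ p, u N ∈ W m := by
    intro p
    have h1 : ∀ᶠ N in atTop, ∀ m ∈ {m | m ≤ p}, u N ∈ W m :=
      (eventually_all_finite (Set.finite_le_nat p)).2
        fun m _ => hut (hW m)
    exact ((eventually_gt_atTop p).and h1).exists
  choose g hg1 hg2 using hnext
  set φ : ℕ → ℕ := fun k => g^[k] 0 with hφdef
  have hφsucc : ∀ k, φ (k + 1) = g (φ k) := fun k => Function.iterate_succ_apply' g k 0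
  have hφmono : StrictMono φ := strictMono_nat_of_lt_succ fun k => by
    rw [hφsucc]; exact hg1 _
  set v : ℕ → X := fun k => u (φ k) with hvdef
  have hkey : ∀ j k, j < k → f (v k) ≠ f (v j) := by
    intro j k hjk
    obtain ⟨k', rfl⟩ : ∃ k', k = k' + 1 := ⟨k - 1, by omega⟩
    have hmem : u (φ (k' + 1)) ∈ W (φ j) := by
      rw [hφsucc]
      exact hg2 (φ k') (φ j) (hφmono.monotone (by omega))
    exact hWnot (φ j) _ hmem
  have hinj : Function.Injective (f ∘ v) := by
    intro a b hab
    by_contra hne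
    rcases lt_or_gt_of_ne hne with h | h
    · exact hkey a b h hab.symm
    · exact hkey b a h hab
  have hvt : Tendsto v atTop (𝓝 x) := hut.comp hφmono.tendsto_atTop
  have hK := hf _ hvt.isCompact_insert_range
  have himg : f '' insert x (Set.range v) = insert (f x) (Set.range (f ∘ v)) := by
    rw [Set.image_insert_eq, Set.range_comp]
  set D : Set Y := Set.range (f ∘ v) with hDdef
  have hDO : ∀ y ∈ D, y ∉ O := by
    rintro y ⟨k, rfl⟩ h
    exact huA (φ k) (Or.inr h)
  have hDeq : D = (insert (f x) D) ∩ Oᶜ := by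
    ext y
    constructor
    · exact fun hy => ⟨Set.mem_insert_of_mem _ hy, hDO y hy⟩
    · rintro ⟨hy, hyO⟩
      rcases hy with rfl | hy
      · exact absurd hfx hyO
      · exact hy
  have hDcompact : IsCompact D := by
    rw [hDeq]
    exact (himg ▸ hK).inter_right hO.isClosed_compl
  have hDinf : D.Infinite := Set.infinite_range_of_injective hinj
  obtain ⟨y, hyD, hacc⟩ :=
    hDinf.exists_accPt_of_subset_isCompact hDcompact subset_rfl
  have hycl : y ∈ closure (D \ {y}) := by
    rw [accPt_principal_iff_clusterPt] at hacc
    exact mem_closure_iff_clusterPt.2 hacc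
  obtain ⟨j, hj⟩ := hyD
  -- the sequence skipping index j
  set w : ℕ → X := fun k => v (if k < j then k else k + 1) with hwdef
  have hwt : Tendsto w atTop (𝓝 x) := by
    refine hvt.comp (tendsto_atTop_mono (f := id) (fun k => ?_) tendsto_id)
    dsimp; split_ifs <;> omega
  have hK' := hf _ hwt.isCompact_insert_range
  have himg' : f '' insert x (Set.range w) = insert (f x) (Set.range (f ∘ w)) := by
    rw [Set.image_insert_eq, Set.range_comp]
  have hsub : D \ {y} ⊆ f '' insert x (Set.range w) := by
    rintro z ⟨⟨k, rfl⟩, hzy⟩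
    have hkj : k ≠ j := fun h => hzy (by rw [h]; exact hj)
    rw [himg']
    refine Set.mem_insert_of_mem _ ⟨if k < j then k else k - 1, ?_⟩
    show f (v (if (if k < j then k else k - 1) < j then (if k < j then k else k - 1)
      else (if k < j then k else k - 1) + 1)) = f (v k)
    congr 2
    split_ifs <;> omega
  have hyin : y ∈ f '' insert x (Set.range w) :=
    ((hf _ hwt.isCompact_insert_range).isClosed.closure_subset_iff.2 hsub) hycl
  rw [himg'] at hyin
  rcases hyin with h | ⟨k, hk⟩
  · exact hDO y ⟨j, hj⟩ (h ▸ hfx)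
  · have : (if k < j then k else k + 1) = j := by
      have : f (v (if k < j then k else k + 1)) = f (v j) := by
        rw [show f (v j) = y from hj]; exact hk
      exact hinj this
    split_ifs at this <;> omega
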